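/- Let Δ₀, Δ₁, Δ₂, … : [0,T] → ℝ (nonnegative) be continuous functions and φ : [0,T] → ℝ≥0 integrable. Suppose Δₙ(s) ≤ ∫ₛᵀ φ(r)(Δₙ(r) + Δₙ₋₁(r)) dr for all s ∈ [0,T] and n ≥ 1. Then, with c = exp(∫₀ᵀ φ(r) dr) and a = sup_{s∈[0,T]} Δ₀(s), one has Δₙ(s) ≤ a · cⁿ/n! · (∫ₛᵀ φ(r) dr)ⁿ for all s ∈ [0,T] and n ≥ 0; in particular Δₙ → 0 uniformly on [0,T]. -/

import Mathlib

open MeasureTheory Set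

lemma swap_aux {s T : ℝ} (f g : ℝ → ℝ)
    (hf : IntegrableOn f (Set.Ioc s T)) (hg : IntegrableOn g (Set.Ioc s T)) :
    ∫ r in Set.Ioc s T, f r * ∫ u in Set.Ioc r T, g u
      = ∫ u in Set.Ioc s T, (∫ r in Set.Ioc s u, f r) * g u := by
  set μ := volume.restrict (Set.Ioc s T) with hμ
  set h : ℝ → ℝ → ℝ := fun r u => if r < u then f r * g u else 0 with hh
  have hmeas : MeasurableSet {p : ℝ × ℝ | p.1 < p.2} := measurableSet_lt measurable_fst measurable_snd
  have hint : Integrable (Function.uncurry h) (μ.prod μ) := by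
    have : Function.uncurry h = {p : ℝ × ℝ | p.1 < p.2}.indicator (fun p => f p.1 * g p.2) := by
      ext p
      simp [Function.uncurry, hh, Set.indicator_apply]
    rw [this]
    exact (hf.mul_prod hg).indicator hmeas
  have step1 : ∫ r in Set.Ioc s T, f r * ∫ u in Set.Ioc r T, g u
      = ∫ r, (∫ u, h r u ∂μ) ∂μ := by
    refine setIntegral_congr_ae measurableSet_Ioc ?_
    filter_upwards with r hr
    have hind : ∀ u, h r u = (Set.Ioi r).indicator (fun u => f r * g u) u := by
      intro u; simp [hh, Set.indicator_apply, Set.mem_Ioi]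
    simp_rw [hind]
    rw [hμ, integral_indicator measurableSet_Ioi, Measure.restrict_restrict measurableSet_Ioi]
    have hset : Set.Ioi r ∩ Set.Ioc s T = Set.Ioc r T := by
      ext x
      simp only [Set.mem_inter_iff, Set.mem_Ioi, Set.mem_Ioc]
      exact ⟨fun ⟨h1, _, h2⟩ => ⟨h1, h2⟩, fun ⟨h1, h2⟩ => ⟨h1, hr.1.trans h1, h2⟩⟩
    rw [hset, MeasureTheory.integral_const_mul]
  have step3 : ∫ u, (∫ r, h r u ∂μ) ∂μ
      = ∫ u in Set.Ioc s T, (∫ r in Set.Ioc s u, f r) * g u := by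
    refine setIntegral_congr_ae measurableSet_Ioc ?_
    filter_upwards with u hu
    have hind : ∀ r, h r u = (Set.Iio u).indicator (fun r => f r * g u) r := by
      intro r; simp [hh, Set.indicator_apply, Set.mem_Iio]
    simp_rw [hind]
    rw [hμ, integral_indicator measurableSet_Iio, Measure.restrict_restrict measurableSet_Iio]
    have hset : Set.Iio u ∩ Set.Ioc s T = Set.Ioo s u := by
      ext x
      simp only [Set.mem_inter_iff, Set.mem_Iio, Set.mem_Ioo, Set.mem_Ioc]
      exact ⟨fun ⟨h1, h2, _⟩ => ⟨h2, h1⟩, fun ⟨h1, h2⟩ => ⟨h2, h1, (h2.le.trans hu.2)⟩⟩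
    rw [hset, ← MeasureTheory.integral_Ioc_eq_integral_Ioo, MeasureTheory.integral_mul_const]
  rw [step1, MeasureTheory.integral_integral_swap hint, step3]
open MeasureTheory Set

section
variable {T : ℝ} {φ : ℝ → ℝ}

lemma gr_sub {s : ℝ} (hs : s ∈ Set.Icc (0:ℝ) T) : Set.Ioc s T ⊆ Set.Icc 0 T :=
  fun x hx => ⟨hs.1.trans hx.1.le, hx.2⟩

lemma gr_int (hφint : IntegrableOn φ (Set.Icc 0 T)) {s : ℝ} (hs : s ∈ Set.Icc (0:ℝ) T) :
    IntegrableOn φ (Set.Ioc s T) := hφint.mono_set (gr_sub hs)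

lemma gr_Fnonneg (hφ0 : ∀ r, 0 ≤ φ r) (s : ℝ) : 0 ≤ ∫ u in Set.Ioc s T, φ u :=
  setIntegral_nonneg measurableSet_Ioc fun x _ => hφ0 x

lemma gr_Fsplit (hφint : IntegrableOn φ (Set.Icc 0 T)) {s u : ℝ}
    (hs : s ∈ Set.Icc (0:ℝ) T) (hsu : s ≤ u) (huT : u ≤ T) :
    ∫ r in Set.Ioc s T, φ r = (∫ r in Set.Ioc s u, φ r) + ∫ r in Set.Ioc u T, φ r := by
  rw [← Set.Ioc_union_Ioc_eq_Ioc hsu huT]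
  exact setIntegral_union (Set.Ioc_disjoint_Ioc_of_le le_rfl) measurableSet_Ioc
    ((gr_int hφint hs).mono_set (Set.Ioc_subset_Ioc le_rfl huT))
    (gr_int hφint ⟨hs.1.trans hsu, huT⟩)

lemma gr_Fmono (hφint : IntegrableOn φ (Set.Icc 0 T)) (hφ0 : ∀ r, 0 ≤ φ r) {s u : ℝ}
    (hs : s ∈ Set.Icc (0:ℝ) T) (hsu : s ≤ u) (huT : u ≤ T) :
    ∫ r in Set.Ioc u T, φ r ≤ ∫ r in Set.Ioc s T, φ r := by
  rw [gr_Fsplit hφint hs hsu huT]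
  have : (0:ℝ) ≤ ∫ r in Set.Ioc s u, φ r := setIntegral_nonneg measurableSet_Ioc fun x _ => hφ0 x
  linarith

lemma gr_Fcont (hT : 0 ≤ T) (hφint : IntegrableOn φ (Set.Icc 0 T)) :
    ContinuousOn (fun s => ∫ u in Set.Ioc s T, φ u) (Set.Icc 0 T) := by
  have h1 : ContinuousOn (fun s => ∫ u in s..T, φ u) (Set.Icc 0 T) := by
    have := intervalIntegral.continuousOn_primitive_interval_left
      (f := φ) (μ := volume) (a := 0) (b := T) (by rwa [Set.uIcc_of_le hT])
    rwa [Set.uIcc_of_le hT] at this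
  refine h1.congr fun s hs => ?_
  dsimp only
  rw [intervalIntegral.integral_of_le hs.2]

lemma gr_intF (hT : 0 ≤ T) (hφint : IntegrableOn φ (Set.Icc 0 T)) (hφ0 : ∀ r, 0 ≤ φ r)
    (j : ℕ) {s : ℝ} (hs : s ∈ Set.Icc (0:ℝ) T) :
    IntegrableOn (fun r => φ r * (∫ u in Set.Ioc r T, φ u) ^ j) (Set.Ioc s T) := by
  set F : ℝ → ℝ := fun s => ∫ u in Set.Ioc s T, φ u with hF
  have hmeas : AEStronglyMeasurable (fun r => F r ^ j) (volume.restrict (Set.Ioc s T)) := by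
    have h0 : AEStronglyMeasurable (fun r => F r ^ j) (volume.restrict (Set.Icc (0:ℝ) T)) :=
      ((gr_Fcont hT hφint).pow j).aestronglyMeasurable measurableSet_Icc
    exact h0.mono_measure (Measure.restrict_mono (gr_sub hs) le_rfl)
  have hbd : ∀ᵐ r ∂(volume.restrict (Set.Ioc s T)), ‖F r ^ j‖ ≤ (F 0) ^ j := by
    filter_upwards [ae_restrict_mem measurableSet_Ioc] with r hr
    rw [Real.norm_eq_abs, abs_of_nonneg (pow_nonneg (gr_Fnonneg hφ0 r) j)]
    exact pow_le_pow_left₀ (gr_Fnonneg hφ0 r)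
      (gr_Fmono hφint hφ0 (Set.left_mem_Icc.2 hT) ((gr_sub hs hr).1) (gr_sub hs hr).2) j
  have := Integrable.bdd_mul (gr_int hφint hs) hmeas hbd
  exact this.congr (by filter_upwards with r; simp only [hF]; ring)


lemma gr_key (hT : 0 ≤ T) (hφint : IntegrableOn φ (Set.Icc 0 T)) (hφ0 : ∀ r, 0 ≤ φ r) :
    ∀ j : ℕ, ∀ s ∈ Set.Icc (0:ℝ) T,
      ((j:ℝ)+1) * ∫ r in Set.Ioc s T, φ r * (∫ u in Set.Ioc r T, φ u) ^ j
        = (∫ r in Set.Ioc s T, φ r) ^ (j+1) := by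
  intro j
  induction j with
  | zero => intro s _; simp
  | succ j ih =>
    intro s hs
    set A := ∫ r in Set.Ioc s T, φ r * (∫ u in Set.Ioc r T, φ u) ^ (j+1) with hA
    set J := ∫ r in Set.Ioc s T, φ r * (∫ u in Set.Ioc r T, φ u) ^ j with hJ
    set Fs := ∫ r in Set.Ioc s T, φ r with hFs
    have h1 : A = ((j:ℝ)+1) * ∫ r in Set.Ioc s T,
        φ r * ∫ u in Set.Ioc r T, (φ u * (∫ v in Set.Ioc u T, φ v) ^ j) := by
      rw [hA, ← MeasureTheory.integral_const_mul]
      refine setIntegral_congr_fun measurableSet_Ioc fun r hr => ?_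
      rw [← ih r (gr_sub hs hr)]; ring
    have h2 : ∫ r in Set.Ioc s T, φ r * ∫ u in Set.Ioc r T, (φ u * (∫ v in Set.Ioc u T, φ v) ^ j)
        = ∫ u in Set.Ioc s T, (∫ r in Set.Ioc s u, φ r) * (φ u * (∫ v in Set.Ioc u T, φ v) ^ j) :=
      swap_aux φ (fun u => φ u * (∫ v in Set.Ioc u T, φ v) ^ j)
        (gr_int hφint hs) (gr_intF hT hφint hφ0 j hs)
    have h3 : ∫ u in Set.Ioc s T, (∫ r in Set.Ioc s u, φ r) * (φ u * (∫ v in Set.Ioc u T, φ v) ^ j)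
        = Fs * J - A := by
      rw [hA, hJ, ← MeasureTheory.integral_const_mul, ← integral_sub
        ((gr_intF hT hφint hφ0 j hs).const_mul Fs) (gr_intF hT hφint hφ0 (j+1) hs)]
      refine setIntegral_congr_fun measurableSet_Ioc fun u hu => ?_
      have hsplit : ∫ r in Set.Ioc s u, φ r = Fs - ∫ v in Set.Ioc u T, φ v := by
        rw [hFs]
        have := gr_Fsplit hφint hs hu.1.le hu.2
        linarith
      rw [hsplit]; ring
    have e1 : A = ((j:ℝ)+1) * (Fs * J - A) := by
      calc A = _ := h1
        _ = ((j:ℝ)+1) * ∫ u in Set.Ioc s T,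
              (∫ r in Set.Ioc s u, φ r) * (φ u * (∫ v in Set.Ioc u T, φ v) ^ j) := by rw [h2]
        _ = ((j:ℝ)+1) * (Fs * J - A) := by rw [h3]
    have e2 := ih s hs
    rw [← hJ, ← hFs] at e2
    have e4 : ((j:ℝ)+1+1) * A = ((j:ℝ)+1) * (Fs * J) := by linarith
    push_cast
    calc ((j:ℝ)+1+1) * A = ((j:ℝ)+1) * (Fs * J) := e4
      _ = Fs * (((j:ℝ)+1) * J) := by ring
      _ = Fs * Fs ^ (j+1) := by rw [e2]
      _ = Fs ^ (j+1+1) := by ring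
lemma gr_Fcont' (hT : 0 ≤ T) (hφint : IntegrableOn φ (Set.Icc 0 T)) :
    ContinuousOn (fun s => ∫ r in s..T, φ r) (Set.Icc 0 T) := by
  have := intervalIntegral.continuousOn_primitive_interval_left
    (f := φ) (μ := volume) (a := 0) (b := T) (by rwa [Set.uIcc_of_le hT])
  rwa [Set.uIcc_of_le hT] at this

lemma gr_Fnonneg' (hφ0 : ∀ r, 0 ≤ φ r) {s : ℝ} (hs : s ∈ Set.Icc (0:ℝ) T) :
    0 ≤ ∫ r in s..T, φ r :=
  intervalIntegral.integral_nonneg hs.2 fun u _ => hφ0 u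

lemma gr_Fle0 (hφint : IntegrableOn φ (Set.Icc 0 T)) (hφ0 : ∀ r, 0 ≤ φ r) {s : ℝ}
    (hs : s ∈ Set.Icc (0:ℝ) T) :
    (∫ r in s..T, φ r) ≤ ∫ r in (0:ℝ)..T, φ r := by
  rw [intervalIntegral.integral_of_le hs.2, intervalIntegral.integral_of_le (hs.1.trans hs.2)]
  exact gr_Fmono hφint hφ0 ⟨le_rfl, hs.1.trans hs.2⟩ hs.1 hs.2

lemma gr_E (hT : 0 ≤ T) (hφint : IntegrableOn φ (Set.Icc 0 T)) (hφ0 : ∀ r, 0 ≤ φ r)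
    (m : ℕ) {s : ℝ} (hs : s ∈ Set.Icc (0:ℝ) T) :
    ∫ r in s..T, φ r * (∫ u in r..T, φ u) ^ m
      = (∫ r in s..T, φ r) ^ (m+1) / ((m:ℝ)+1) := by
  have h0 : Set.EqOn (fun r => φ r * (∫ u in r..T, φ u) ^ m)
      (fun r => φ r * (∫ u in Set.Ioc r T, φ u) ^ m) (Set.Ioc s T) := fun r hr => by
    simp only [intervalIntegral.integral_of_le hr.2]
  rw [intervalIntegral.integral_of_le hs.2, setIntegral_congr_fun measurableSet_Ioc h0,
    intervalIntegral.integral_of_le hs.2]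
  have hkey := gr_key hT hφint hφ0 m s hs
  have hm : ((m:ℝ)+1) ≠ 0 := by positivity
  field_simp
  linarith [hkey]

lemma gr_intI (hT : 0 ≤ T) (hφint : IntegrableOn φ (Set.Icc 0 T)) (hφ0 : ∀ r, 0 ≤ φ r)
    (m : ℕ) {s : ℝ} (hs : s ∈ Set.Icc (0:ℝ) T) :
    IntervalIntegrable (fun r => φ r * (∫ u in r..T, φ u) ^ m) volume s T := by
  rw [intervalIntegrable_iff_integrableOn_Ioc_of_le hs.2]
  refine (gr_intF hT hφint hφ0 m hs).congr_fun ?_ measurableSet_Ioc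
  intro r hr
  simp only [intervalIntegral.integral_of_le hr.2]

lemma gr_intC (hφint : IntegrableOn φ (Set.Icc 0 T)) {ψ : ℝ → ℝ}
    (hψ : ContinuousOn ψ (Set.Icc 0 T)) {s : ℝ} (hs : s ∈ Set.Icc (0:ℝ) T) :
    IntervalIntegrable (fun r => φ r * ψ r) volume s T := by
  obtain ⟨C, hC⟩ := isCompact_Icc.exists_bound_of_continuousOn hψ
  rw [intervalIntegrable_iff_integrableOn_Ioc_of_le hs.2]
  have hm : AEStronglyMeasurable ψ (volume.restrict (Set.Ioc s T)) :=
    (hψ.aestronglyMeasurable measurableSet_Icc).mono_measure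
      (Measure.restrict_mono (gr_sub hs) le_rfl)
  have hbd : ∀ᵐ r ∂(volume.restrict (Set.Ioc s T)), ‖ψ r‖ ≤ C := by
    filter_upwards [ae_restrict_mem measurableSet_Ioc] with r hr
    exact hC r (gr_sub hs hr)
  exact ((gr_int hφint hs).bdd_mul hm hbd).congr (by filter_upwards with r; ring_nf)
lemma gronwall_aux (hT : 0 ≤ T) (hφint : IntegrableOn φ (Set.Icc 0 T)) (hφ0 : ∀ r, 0 ≤ φ r)
    (D : ℝ → ℝ) (hDc : ContinuousOn D (Set.Icc 0 T)) (hD0 : ∀ s, 0 ≤ D s)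
    (KA : ℝ) (hKA : 0 ≤ KA) (m : ℕ)
    (hrec2 : ∀ s ∈ Set.Icc (0:ℝ) T,
      D s ≤ KA * (∫ r in s..T, φ r) ^ m + ∫ r in s..T, φ r * D r) :
    ∀ s ∈ Set.Icc (0:ℝ) T,
      D s ≤ KA * Real.exp (∫ r in (0:ℝ)..T, φ r) * (∫ r in s..T, φ r) ^ m := by
  have hFc := gr_Fcont' hT hφint
  set M := sSup (D '' Set.Icc 0 T) with hMdef
  have hM : ∀ r ∈ Set.Icc (0:ℝ) T, D r ≤ M := fun r hr =>
    le_csSup (isCompact_Icc.bddAbove_image hDc) ⟨r, hr, rfl⟩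
  have hM0 : 0 ≤ M := (hD0 0).trans (hM 0 ⟨le_rfl, hT⟩)
  have inner : ∀ k : ℕ, ∀ s ∈ Set.Icc (0:ℝ) T,
      D s ≤ KA * (∫ r in s..T, φ r) ^ m
          * (∑ i ∈ Finset.range k, (∫ r in s..T, φ r) ^ i / (i.factorial : ℝ))
        + M * (∫ r in s..T, φ r) ^ k / (k.factorial : ℝ) := by
    intro k
    induction k with
    | zero =>
      intro s hs
      simpa using hM s hs
    | succ k ihk =>
      intro s hs
      set ψ : ℝ → ℝ := fun r => KA * (∫ u in r..T, φ u) ^ m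
          * (∑ i ∈ Finset.range k, (∫ u in r..T, φ u) ^ i / (i.factorial : ℝ))
        + M * (∫ u in r..T, φ u) ^ k / (k.factorial : ℝ) with hψdef
      have hψc : ContinuousOn ψ (Set.Icc 0 T) := by
        apply ContinuousOn.add
        · exact (continuousOn_const.mul (hFc.pow m)).mul
            (continuousOn_finset_sum _ fun i _ => (hFc.pow i).div_const _)
        · exact (continuousOn_const.mul (hFc.pow k)).div_const _
      have hmono : ∫ r in s..T, φ r * D r ≤ ∫ r in s..T, φ r * ψ r := by
        refine intervalIntegral.integral_mono_on hs.2 (gr_intC hφint hDc hs)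
          (gr_intC hφint hψc hs) fun r hr => ?_
        exact mul_le_mul_of_nonneg_left (ihk r ⟨hs.1.trans hr.1, hr.2⟩) (hφ0 r)
      -- rewrite the integrand as a finite sum of powers
      have hptwise : Set.EqOn (fun r => φ r * ψ r)
          (fun r => (∑ i ∈ Finset.range k,
              (KA / (i.factorial : ℝ)) * (φ r * (∫ u in r..T, φ u) ^ (m + i)))
            + (M / (k.factorial : ℝ)) * (φ r * (∫ u in r..T, φ u) ^ k))
          (Set.uIcc s T) := by
        intro r _
        simp only [hψdef, Finset.mul_sum]
        rw [mul_add, Finset.mul_sum]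
        congr 1
        · refine Finset.sum_congr rfl fun i _ => ?_
          rw [pow_add]; ring
        · ring
      have hI1 : IntervalIntegrable (fun r => ∑ i ∈ Finset.range k,
          (KA / (i.factorial : ℝ)) * (φ r * (∫ u in r..T, φ u) ^ (m + i))) volume s T :=
        by
        have h := IntervalIntegrable.sum (μ := volume) (a := s) (b := T) (Finset.range k)
          (f := fun i r => (KA / (i.factorial : ℝ)) * (φ r * (∫ u in r..T, φ u) ^ (m + i)))
          (fun i _ => (gr_intI hT hφint hφ0 (m + i) hs).const_mul _)
        have e : (∑ i ∈ Finset.range k, fun r =>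
            (KA / (i.factorial : ℝ)) * (φ r * (∫ u in r..T, φ u) ^ (m + i)))
            = fun r => ∑ i ∈ Finset.range k,
              (KA / (i.factorial : ℝ)) * (φ r * (∫ u in r..T, φ u) ^ (m + i)) := by
          ext r; simp
        rwa [e] at h
      have hI2 : IntervalIntegrable (fun r =>
          (M / (k.factorial : ℝ)) * (φ r * (∫ u in r..T, φ u) ^ k)) volume s T :=
        (gr_intI hT hφint hφ0 k hs).const_mul _
      have hcalc : ∫ r in s..T, φ r * ψ r
          = (∑ i ∈ Finset.range k, (KA / (i.factorial : ℝ))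
              * ((∫ r in s..T, φ r) ^ (m + i + 1) / (((m + i : ℕ) : ℝ) + 1)))
            + (M / (k.factorial : ℝ)) * ((∫ r in s..T, φ r) ^ (k + 1) / ((k:ℝ) + 1)) := by
        rw [intervalIntegral.integral_congr hptwise, intervalIntegral.integral_add hI1 hI2,
          intervalIntegral.integral_finset_sum
            (fun i _ => (gr_intI hT hφint hφ0 (m + i) hs).const_mul _)]
        simp only [intervalIntegral.integral_const_mul]
        congr 1
        · exact Finset.sum_congr rfl fun i _ => by rw [gr_E hT hφint hφ0 (m + i) hs]
        · rw [gr_E hT hφint hφ0 k hs]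
      have hFnn : 0 ≤ ∫ r in s..T, φ r := gr_Fnonneg' hφ0 hs
      set Fs := ∫ r in s..T, φ r with hFsdef
      -- bound each summand
      have hterm : ∀ i ∈ Finset.range k,
          (KA / (i.factorial : ℝ)) * (Fs ^ (m + i + 1) / (((m + i : ℕ) : ℝ) + 1))
          ≤ KA * Fs ^ m * (Fs ^ (i + 1) / ((i+1).factorial : ℝ)) := by
        intro i _
        have hpow : Fs ^ (m + i + 1) = Fs ^ m * Fs ^ (i + 1) := by
          rw [show m + i + 1 = m + (i + 1) from by omega, pow_add]
        have hfac1 : (1:ℝ) ≤ (i.factorial : ℝ) := by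
          exact_mod_cast Nat.one_le_iff_ne_zero.mpr (Nat.factorial_ne_zero i)
        have hd2 : (0:ℝ) < ((i+1).factorial : ℝ) := by positivity
        have hdle : ((i+1).factorial : ℝ) ≤ (i.factorial : ℝ) * (((m + i : ℕ) : ℝ) + 1) := by
          rw [Nat.factorial_succ]
          push_cast
          have h1 : ((i:ℝ) + 1) ≤ ((m:ℝ) + i + 1) := by
            have : (0:ℝ) ≤ (m:ℝ) := Nat.cast_nonneg m
            linarith
          nlinarith
        have lhs_eq : (KA / (i.factorial : ℝ)) * (Fs ^ (m + i + 1) / (((m + i : ℕ) : ℝ) + 1))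
            = KA * Fs ^ (m + i + 1) / ((i.factorial : ℝ) * (((m + i : ℕ) : ℝ) + 1)) :=
          div_mul_div_comm _ _ _ _
        have rhs_eq : KA * Fs ^ m * (Fs ^ (i + 1) / ((i+1).factorial : ℝ))
            = KA * Fs ^ (m + i + 1) / ((i+1).factorial : ℝ) := by
          rw [hpow]; ring
        rw [lhs_eq, rhs_eq]
        exact div_le_div_of_nonneg_left (by positivity) hd2 hdle
      have hsum_le : ∑ i ∈ Finset.range k,
            (KA / (i.factorial : ℝ)) * (Fs ^ (m + i + 1) / (((m + i : ℕ) : ℝ) + 1))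
          ≤ ∑ i ∈ Finset.range k, KA * Fs ^ m * (Fs ^ (i + 1) / ((i+1).factorial : ℝ)) :=
        Finset.sum_le_sum hterm
      -- reassemble the sum
      have hreassoc : KA * Fs ^ m
          + ∑ i ∈ Finset.range k, KA * Fs ^ m * (Fs ^ (i + 1) / ((i+1).factorial : ℝ))
          = KA * Fs ^ m * (∑ i ∈ Finset.range (k+1), Fs ^ i / (i.factorial : ℝ)) := by
        rw [Finset.sum_range_succ' (fun i => Fs ^ i / (i.factorial : ℝ)) k, mul_add,
          Finset.mul_sum]
        have h0 : Fs ^ 0 / ((Nat.factorial 0 : ℕ) : ℝ) = 1 := by simp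
        rw [h0, mul_one, add_comm]
      have hrem : (M / (k.factorial : ℝ)) * (Fs ^ (k + 1) / ((k:ℝ) + 1))
          = M * Fs ^ (k+1) / ((k+1).factorial : ℝ) := by
        have hf : ((k+1).factorial : ℝ) = ((k:ℝ) + 1) * (k.factorial : ℝ) := by
          rw [Nat.factorial_succ]; push_cast; ring
        rw [hf, div_mul_div_comm, mul_comm ((k.factorial:ℝ)) ((k:ℝ)+1)]
      calc D s ≤ KA * Fs ^ m + ∫ r in s..T, φ r * D r := hrec2 s hs
        _ ≤ KA * Fs ^ m + ∫ r in s..T, φ r * ψ r := by linarith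
        _ = KA * Fs ^ m + ((∑ i ∈ Finset.range k, (KA / (i.factorial : ℝ))
              * (Fs ^ (m + i + 1) / (((m + i : ℕ) : ℝ) + 1)))
            + (M / (k.factorial : ℝ)) * (Fs ^ (k + 1) / ((k:ℝ) + 1))) := by rw [hcalc]
        _ ≤ KA * Fs ^ m + ((∑ i ∈ Finset.range k, KA * Fs ^ m * (Fs ^ (i + 1) / ((i+1).factorial : ℝ)))
            + (M / (k.factorial : ℝ)) * (Fs ^ (k + 1) / ((k:ℝ) + 1))) := by linarith
        _ = KA * Fs ^ m * (∑ i ∈ Finset.range (k+1), Fs ^ i / (i.factorial : ℝ))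
            + M * Fs ^ (k+1) / ((k+1).factorial : ℝ) := by rw [← hreassoc, ← hrem]; ring
  -- pass to the limit
  intro s hs
  have hFnn : 0 ≤ ∫ r in s..T, φ r := gr_Fnonneg' hφ0 hs
  have hFle : (∫ r in s..T, φ r) ≤ ∫ r in (0:ℝ)..T, φ r := gr_Fle0 hφint hφ0 hs
  set Fs := ∫ r in s..T, φ r with hFsdef
  set F0 := ∫ r in (0:ℝ)..T, φ r with hF0def
  have hbd : ∀ k : ℕ, D s ≤ KA * Fs ^ m * Real.exp F0 + M * F0 ^ k / (k.factorial : ℝ) := by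
    intro k
    have h1 := inner k s hs
    have h2 : (∑ i ∈ Finset.range k, Fs ^ i / (i.factorial : ℝ)) ≤ Real.exp F0 :=
      le_trans (Real.sum_le_exp_of_nonneg hFnn k) (Real.exp_le_exp.mpr hFle)
    have h3 : M * Fs ^ k / (k.factorial : ℝ) ≤ M * F0 ^ k / (k.factorial : ℝ) := by
      have hp : Fs ^ k ≤ F0 ^ k := pow_le_pow_left₀ hFnn hFle k
      have hk : (0:ℝ) ≤ (k.factorial : ℝ) := by positivity
      exact div_le_div_of_nonneg_right (mul_le_mul_of_nonneg_left hp hM0) hk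
    have h4 : KA * Fs ^ m * (∑ i ∈ Finset.range k, Fs ^ i / (i.factorial : ℝ))
        ≤ KA * Fs ^ m * Real.exp F0 :=
      mul_le_mul_of_nonneg_left h2 (mul_nonneg hKA (pow_nonneg hFnn m))
    linarith
  have hlim : Filter.Tendsto
      (fun k : ℕ => KA * Fs ^ m * Real.exp F0 + M * F0 ^ k / (k.factorial : ℝ))
      Filter.atTop (nhds (KA * Fs ^ m * Real.exp F0 + M * 0)) := by
    apply Filter.Tendsto.add tendsto_const_nhds
    have := (FloorSemiring.tendsto_pow_div_factorial_atTop (K := ℝ) F0).const_mul M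
    simpa [mul_div_assoc] using this
  have hfin := ge_of_tendsto hlim (Filter.Eventually.of_forall hbd)
  calc D s ≤ KA * Fs ^ m * Real.exp F0 + M * 0 := hfin
    _ = KA * Real.exp F0 * Fs ^ m := by ring
end
/-- Iterated backward Gronwall estimate: if `Δₙ(s) ≤ ∫ₛᵀ φ(r)(Δₙ(r) + Δₙ₋₁(r)) dr` for `n ≥ 1`,
then `Δₙ(s) ≤ a cⁿ/n! (∫ₛᵀ φ)ⁿ` with `c = exp(∫₀ᵀ φ)`, `a = sup Δ₀`; in particular `Δₙ → 0`
uniformly on `[0,T]`. -/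
theorem stmt_7 (T : ℝ) (hT : 0 < T) (Δ : ℕ → ℝ → ℝ) (φ : ℝ → ℝ)
    (hφint : IntegrableOn φ (Set.Icc 0 T))
    (hφ0 : ∀ r, 0 ≤ φ r)
    (hΔcont : ∀ n, ContinuousOn (Δ n) (Set.Icc 0 T))
    (hΔ0 : ∀ n s, 0 ≤ Δ n s)
    (hrec : ∀ n : ℕ, 1 ≤ n → ∀ s ∈ Set.Icc (0 : ℝ) T,
      Δ n s ≤ ∫ r in s..T, φ r * (Δ n r + Δ (n - 1) r)) :
    (∀ n : ℕ, ∀ s ∈ Set.Icc (0 : ℝ) T,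
        Δ n s ≤ sSup (Δ 0 '' Set.Icc 0 T) * (Real.exp (∫ r in (0 : ℝ)..T, φ r)) ^ n
          / (n.factorial : ℝ) * (∫ r in s..T, φ r) ^ n) ∧
      TendstoUniformlyOn (fun n s => Δ n s) (fun _ => (0 : ℝ)) Filter.atTop
        (Set.Icc 0 T) := by
  have hT' : (0:ℝ) ≤ T := hT.le
  set a := sSup (Δ 0 '' Set.Icc 0 T) with hadef
  set c := Real.exp (∫ r in (0:ℝ)..T, φ r) with hcdef
  have ha : ∀ s ∈ Set.Icc (0:ℝ) T, Δ 0 s ≤ a := fun s hs =>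
    le_csSup (isCompact_Icc.bddAbove_image (hΔcont 0)) ⟨s, hs, rfl⟩
  have ha0 : 0 ≤ a := (hΔ0 0 0).trans (ha 0 ⟨le_rfl, hT'⟩)
  have hc0 : 0 < c := Real.exp_pos _
  have main : ∀ n : ℕ, ∀ s ∈ Set.Icc (0:ℝ) T,
      Δ n s ≤ a * c ^ n / (n.factorial : ℝ) * (∫ r in s..T, φ r) ^ n := by
    intro n
    induction n with
    | zero =>
      intro s hs
      simpa using ha s hs
    | succ n ihn =>
      set K := a * c ^ n / (n.factorial : ℝ) with hKdef
      have hK0 : 0 ≤ K := by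
        apply div_nonneg (mul_nonneg ha0 (pow_nonneg hc0.le n))
        positivity
      have hfact : (((n+1).factorial : ℕ) : ℝ) = ((n:ℝ) + 1) * (n.factorial : ℝ) := by
        rw [Nat.factorial_succ]; push_cast; ring
      set KA := a * c ^ n / (((n+1).factorial : ℕ) : ℝ) with hKAdef
      have hKA0 : 0 ≤ KA := by
        apply div_nonneg (mul_nonneg ha0 (pow_nonneg hc0.le n))
        positivity
      have hKA_eq : KA = K / ((n:ℝ) + 1) := by
        rw [hKdef, hKAdef, hfact, mul_comm ((n:ℝ) + 1), ← div_div]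
      have hKKA : ∀ X : ℝ, K * (X / ((n:ℝ) + 1)) = KA * X := by
        intro X
        rw [hKA_eq]
        ring
      have hrec2 : ∀ s ∈ Set.Icc (0:ℝ) T,
          Δ (n+1) s ≤ KA * (∫ r in s..T, φ r) ^ (n+1) + ∫ r in s..T, φ r * Δ (n+1) r := by
        intro s hs
        have h0 := hrec (n+1) (by omega) s hs
        simp only [Nat.add_sub_cancel] at h0
        have hcont2 : ContinuousOn (fun r => Δ (n+1) r + Δ n r) (Set.Icc 0 T) :=
          (hΔcont (n+1)).add (hΔcont n)
        have hint1 : IntervalIntegrable (fun r => φ r * (Δ (n+1) r + Δ n r)) volume s T :=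
          gr_intC hφint hcont2 hs
        have hint2 : IntervalIntegrable
            (fun r => φ r * Δ (n+1) r + K * (φ r * (∫ u in r..T, φ u) ^ n)) volume s T :=
          (gr_intC hφint (hΔcont (n+1)) hs).add ((gr_intI hT' hφint hφ0 n hs).const_mul K)
        have hmono : ∫ r in s..T, φ r * (Δ (n+1) r + Δ n r)
            ≤ ∫ r in s..T, (φ r * Δ (n+1) r + K * (φ r * (∫ u in r..T, φ u) ^ n)) := by
          refine intervalIntegral.integral_mono_on hs.2 hint1 hint2 fun r hr => ?_
          have hr' : r ∈ Set.Icc (0:ℝ) T := ⟨hs.1.trans hr.1, hr.2⟩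
          have h1 : φ r * Δ n r ≤ K * (φ r * (∫ u in r..T, φ u) ^ n) :=
            (mul_le_mul_of_nonneg_left (ihn r hr') (hφ0 r)).trans_eq (by ring)
          calc φ r * (Δ (n+1) r + Δ n r) = φ r * Δ (n+1) r + φ r * Δ n r := by ring
            _ ≤ φ r * Δ (n+1) r + K * (φ r * (∫ u in r..T, φ u) ^ n) := by linarith
        have hsplit : ∫ r in s..T, (φ r * Δ (n+1) r + K * (φ r * (∫ u in r..T, φ u) ^ n))
            = (∫ r in s..T, φ r * Δ (n+1) r)
              + K * ((∫ r in s..T, φ r) ^ (n+1) / ((n:ℝ) + 1)) := by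
          rw [intervalIntegral.integral_add (gr_intC hφint (hΔcont (n+1)) hs)
            ((gr_intI hT' hφint hφ0 n hs).const_mul K),
            intervalIntegral.integral_const_mul, gr_E hT' hφint hφ0 n hs]
        calc Δ (n+1) s ≤ ∫ r in s..T, φ r * (Δ (n+1) r + Δ n r) := h0
          _ ≤ ∫ r in s..T, (φ r * Δ (n+1) r + K * (φ r * (∫ u in r..T, φ u) ^ n)) := hmono
          _ = (∫ r in s..T, φ r * Δ (n+1) r)
              + K * ((∫ r in s..T, φ r) ^ (n+1) / ((n:ℝ) + 1)) := hsplit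
          _ = KA * (∫ r in s..T, φ r) ^ (n+1) + ∫ r in s..T, φ r * Δ (n+1) r := by
              rw [hKKA]; ring
      intro s hs
      have hg := gronwall_aux hT' hφint hφ0 (Δ (n+1)) (hΔcont (n+1)) (hΔ0 (n+1))
        KA hKA0 (n+1) hrec2 s hs
      calc Δ (n+1) s ≤ KA * c * (∫ r in s..T, φ r) ^ (n+1) := hg
        _ = a * c ^ (n+1) / (((n+1).factorial : ℕ) : ℝ) * (∫ r in s..T, φ r) ^ (n+1) := by
            rw [hKAdef]; ring
  refine ⟨main, ?_⟩
  rw [Metric.tendstoUniformlyOn_iff]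
  intro ε hε
  set F0 := ∫ r in (0:ℝ)..T, φ r with hF0def
  have hF0nn : 0 ≤ F0 := gr_Fnonneg' hφ0 ⟨le_rfl, hT'⟩
  have hb : Filter.Tendsto (fun n : ℕ => a * ((c * F0) ^ n / (n.factorial : ℝ)))
      Filter.atTop (nhds (a * 0)) :=
    (FloorSemiring.tendsto_pow_div_factorial_atTop (K := ℝ) (c * F0)).const_mul a
  rw [mul_zero] at hb
  filter_upwards [hb.eventually_lt_const hε] with n hn
  intro x hx
  have h1 := main n x hx
  have hFnn : 0 ≤ ∫ r in x..T, φ r := gr_Fnonneg' hφ0 hx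
  have hFle : (∫ r in x..T, φ r) ≤ F0 := gr_Fle0 hφint hφ0 hx
  have h2 : Δ n x ≤ a * ((c * F0) ^ n / (n.factorial : ℝ)) := by
    have hp : (∫ r in x..T, φ r) ^ n ≤ F0 ^ n := pow_le_pow_left₀ hFnn hFle n
    have hcoef : 0 ≤ a * c ^ n / (n.factorial : ℝ) := by
      apply div_nonneg (mul_nonneg ha0 (pow_nonneg hc0.le n))
      positivity
    calc Δ n x ≤ a * c ^ n / (n.factorial : ℝ) * (∫ r in x..T, φ r) ^ n := h1
      _ ≤ a * c ^ n / (n.factorial : ℝ) * F0 ^ n := mul_le_mul_of_nonneg_left hp hcoef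
      _ = a * ((c * F0) ^ n / (n.factorial : ℝ)) := by rw [mul_pow]; ring
  have hd : dist ((fun _ => (0:ℝ)) x) ((fun n s => Δ n s) n x) = Δ n x := by
    simp [Real.dist_eq, abs_of_nonneg (hΔ0 n x)]
  rw [hd]
  linarith
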